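/- Fix a real number y and a natural number n. For every real polynomial q(x) of degree at most n, q(x) = Σ_{k=0}^{n} b_k · ₍B₎E_k(x;y) for all x, where b_k = (1/k!) · ⟨ ((e^t+1)/2) · e^{−y(e^t−1)} · t^k | q(x) ⟩ and ⟨·|·⟩ is the umbral pairing. -/

import Mathlib

open PowerSeries Finset

/-- The series `e^{x t}`. -/
noncomputable def expXT (x : ℝ) : PowerSeries ℝ :=
  PowerSeries.rescale x (PowerSeries.exp ℝ)

/-- The series `e^{y (e^t - 1)} = ∑_{k ≥ 0} y^k (e^t - 1)^k / k!`
(the inner sum is finite in each coefficient since `(e^t - 1)^k` has order `≥ k`). -/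
noncomputable def bellSeries (y : ℝ) : PowerSeries ℝ :=
  PowerSeries.mk fun n =>
    ∑ k ∈ Finset.range (n + 1),
      y ^ k * ((k.factorial : ℝ))⁻¹ * PowerSeries.coeff (R := ℝ) n ((PowerSeries.exp ℝ - 1) ^ k)

/-- The series `(2 / (e^t + 1))^α`. -/
noncomputable def eulerSeries (α : ℕ) : PowerSeries ℝ :=
  (2 * (PowerSeries.exp ℝ + 1)⁻¹) ^ α

/-- The Bell-based Euler polynomial `₍B₎E_n^(α)(x; y)`:
`n!` times the coefficient of `t^n` in `(2/(e^t+1))^α e^{xt + y(e^t-1)}`. -/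
noncomputable def bellEuler (α : ℕ) (x y : ℝ) (n : ℕ) : ℝ :=
  n.factorial * PowerSeries.coeff (R := ℝ) n (eulerSeries α * expXT x * bellSeries y)

/-- The umbral pairing `⟨g(t) | q(x)⟩ = ∑_m q_m · m! · (coeff of t^m in g)`. -/
noncomputable def umbral (g : PowerSeries ℝ) (q : Polynomial ℝ) : ℝ :=
  ∑ m ∈ Finset.range (q.natDegree + 1),
    q.coeff m * m.factorial * PowerSeries.coeff (R := ℝ) m g

lemma coeff_u_pow_eq_zero {k m : ℕ} (h : m < k) :
    PowerSeries.coeff (R := ℝ) m ((PowerSeries.exp ℝ - 1) ^ k) = 0 := by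
  have hd : (PowerSeries.X : PowerSeries ℝ) ∣ (PowerSeries.exp ℝ - 1) := by
    rw [PowerSeries.X_dvd_iff]; simp
  obtain ⟨w, hw⟩ := pow_dvd_pow_of_dvd hd k
  rw [hw, mul_comm, PowerSeries.coeff_mul_X_pow', if_neg (by omega)]

lemma coeff_bell' (y : ℝ) (m N : ℕ) (h : m < N) :
    PowerSeries.coeff (R := ℝ) m (bellSeries y) =
      ∑ k ∈ Finset.range N,
        y ^ k * ((k.factorial : ℝ))⁻¹ * PowerSeries.coeff (R := ℝ) m ((PowerSeries.exp ℝ - 1) ^ k) := by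
  rw [bellSeries, PowerSeries.coeff_mk]
  refine Finset.sum_subset (Finset.range_subset_range.2 h) fun k _ hk => ?_
  rw [coeff_u_pow_eq_zero (by simpa using hk), mul_zero]

lemma bell_add (y y' : ℝ) : bellSeries y * bellSeries y' = bellSeries (y + y') := by
  ext n
  set u : PowerSeries ℝ := PowerSeries.exp ℝ - 1 with hu
  rw [PowerSeries.coeff_mul]
  have step1 :
      ∑ p ∈ Finset.HasAntidiagonal.antidiagonal n,
          PowerSeries.coeff (R := ℝ) p.1 (bellSeries y) * PowerSeries.coeff (R := ℝ) p.2 (bellSeries y') =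
        ∑ j ∈ Finset.range (n + 1), ∑ k ∈ Finset.range (n + 1),
          (y ^ j * ((j.factorial : ℝ))⁻¹ * (y' ^ k * ((k.factorial : ℝ))⁻¹)) *
            PowerSeries.coeff (R := ℝ) n (u ^ (j + k)) := by
    have : ∀ p ∈ Finset.HasAntidiagonal.antidiagonal n,
        PowerSeries.coeff (R := ℝ) p.1 (bellSeries y) * PowerSeries.coeff (R := ℝ) p.2 (bellSeries y') =
        ∑ j ∈ Finset.range (n + 1), ∑ k ∈ Finset.range (n + 1),
          (y ^ j * ((j.factorial : ℝ))⁻¹ * (y' ^ k * ((k.factorial : ℝ))⁻¹)) *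
            (PowerSeries.coeff (R := ℝ) p.1 (u ^ j) * PowerSeries.coeff (R := ℝ) p.2 (u ^ k)) := by
      intro p hp
      have hp1 : p.1 < n + 1 := by
        have := Finset.HasAntidiagonal.antidiagonal.fst_le hp; omega
      have hp2 : p.2 < n + 1 := by
        have := Finset.HasAntidiagonal.antidiagonal.snd_le hp; omega
      rw [coeff_bell' y p.1 (n + 1) hp1, coeff_bell' y' p.2 (n + 1) hp2,
        Finset.sum_mul_sum]
      refine Finset.sum_congr rfl fun j _ => Finset.sum_congr rfl fun k _ => by ring
    rw [Finset.sum_congr rfl this, Finset.sum_comm]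
    refine Finset.sum_congr rfl fun j _ => ?_
    rw [Finset.sum_comm]
    refine Finset.sum_congr rfl fun k _ => ?_
    rw [← Finset.mul_sum, pow_add, PowerSeries.coeff_mul, Finset.mul_sum]
  rw [step1, bellSeries, PowerSeries.coeff_mk]
  have step2 :
      ∀ j ∈ Finset.range (n + 1),
        (∑ k ∈ Finset.range (n + 1),
          (y ^ j * ((j.factorial : ℝ))⁻¹ * (y' ^ k * ((k.factorial : ℝ))⁻¹)) *
            PowerSeries.coeff (R := ℝ) n (u ^ (j + k))) =
        ∑ k ∈ Finset.range (n + 1 - j),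
          (y ^ j * ((j.factorial : ℝ))⁻¹ * (y' ^ k * ((k.factorial : ℝ))⁻¹)) *
            PowerSeries.coeff (R := ℝ) n (u ^ (j + k)) := by
    intro j hj
    refine (Finset.sum_subset (Finset.range_subset_range.2 (by omega)) fun k _ hk => ?_).symm
    rw [coeff_u_pow_eq_zero (by simp at hk ⊢; omega), mul_zero]
  rw [Finset.sum_congr rfl step2, ← Finset.sum_range_diag_flip (n + 1)
    (fun j k => (y ^ j * ((j.factorial : ℝ))⁻¹ * (y' ^ k * ((k.factorial : ℝ))⁻¹)) *
      PowerSeries.coeff (R := ℝ) n (u ^ (j + k)))]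
  refine Finset.sum_congr rfl fun m hm => ?_
  have : ∀ k ∈ Finset.range (m + 1),
      (y ^ k * ((k.factorial : ℝ))⁻¹ * (y' ^ (m - k) * (((m - k).factorial : ℝ))⁻¹)) *
        PowerSeries.coeff (R := ℝ) n (u ^ (k + (m - k))) =
      (y ^ k * y' ^ (m - k) * (m.choose k) * ((m.factorial : ℝ))⁻¹) *
        PowerSeries.coeff (R := ℝ) n (u ^ m) := by
    intro k hk
    have hkm : k ≤ m := by simpa [Nat.lt_succ_iff] using hk
    rw [Nat.add_sub_cancel' hkm]
    have hfac : (m.choose k : ℝ) * k.factorial * (m - k).factorial = m.factorial := by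
      exact_mod_cast congrArg (Nat.cast (R := ℝ))
        (Nat.choose_mul_factorial_mul_factorial hkm)
    have h1 : (k.factorial : ℝ) ≠ 0 := Nat.cast_ne_zero.2 k.factorial_ne_zero
    have h2 : ((m - k).factorial : ℝ) ≠ 0 := Nat.cast_ne_zero.2 (m - k).factorial_ne_zero
    have h3 : (m.factorial : ℝ) ≠ 0 := Nat.cast_ne_zero.2 m.factorial_ne_zero
    congr 1
    field_simp
    linear_combination (-(y ^ k * y' ^ (m - k))) * hfac
  rw [Finset.sum_congr rfl this, ← Finset.sum_mul]
  congr 1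
  rw [← Finset.sum_mul, add_pow]

lemma bell_zero : bellSeries 0 = 1 := by
  ext n
  rw [bellSeries, PowerSeries.coeff_mk]
  rw [Finset.sum_eq_single_of_mem 0 (Finset.mem_range.2 (by omega))
    (fun k _ hk => by simp [zero_pow hk])]
  simp

lemma bell_inv (y : ℝ) : bellSeries (-y) * bellSeries y = 1 := by
  rw [bell_add]; simp [bell_zero]

lemma g_mul_f (y : ℝ) :
    (((2 : ℝ)⁻¹ • (PowerSeries.exp ℝ + 1)) * bellSeries (-y)) *
      (eulerSeries 1 * bellSeries y) = 1 := by
  have hc : PowerSeries.constantCoeff (R := ℝ) (PowerSeries.exp ℝ + 1) ≠ 0 := by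
    simp
  have h1 : (PowerSeries.exp ℝ + 1) * (PowerSeries.exp ℝ + 1)⁻¹ = 1 :=
    PowerSeries.mul_inv_cancel _ hc
  have : (((2 : ℝ)⁻¹ • (PowerSeries.exp ℝ + 1)) * bellSeries (-y)) *
      (eulerSeries 1 * bellSeries y) =
      ((2 : ℝ)⁻¹ • (2 * ((PowerSeries.exp ℝ + 1) * (PowerSeries.exp ℝ + 1)⁻¹))) *
        (bellSeries (-y) * bellSeries y) := by
    rw [eulerSeries, pow_one]
    rw [smul_mul_assoc, smul_mul_assoc, smul_mul_assoc]
    congr 1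
    ring
  rw [this, h1, bell_inv, mul_one, mul_one]
  rw [PowerSeries.smul_eq_C_mul,
    show (2 : PowerSeries ℝ) = PowerSeries.C (R := ℝ) 2 from (map_ofNat (PowerSeries.C (R := ℝ)) 2).symm,
    ← map_mul]
  norm_num

theorem stmt10 (y : ℝ) (n : ℕ) (q : Polynomial ℝ) (hq : q.natDegree ≤ n) (x : ℝ) :
    q.eval x =
      ∑ k ∈ Finset.range (n + 1),
        (((k.factorial : ℝ))⁻¹ *
            umbral (((2 : ℝ)⁻¹ • (PowerSeries.exp ℝ + 1)) * bellSeries (-y) *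
              PowerSeries.X ^ k) q) *
          bellEuler 1 x y k := by
  set g : PowerSeries ℝ := ((2 : ℝ)⁻¹ • (PowerSeries.exp ℝ + 1)) * bellSeries (-y) with hg
  set F : PowerSeries ℝ := eulerSeries 1 * expXT x * bellSeries y with hF
  have hgF : ∀ m : ℕ, PowerSeries.coeff (R := ℝ) m (F * g) = x ^ m * ((m.factorial : ℝ))⁻¹ := by
    intro m
    have : F * g = expXT x := by
      have : F * g = (g * (eulerSeries 1 * bellSeries y)) * expXT x := by ring
      rw [this, g_mul_f, one_mul]
    rw [this, expXT, PowerSeries.coeff_rescale, PowerSeries.coeff_exp]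
    simp [div_eq_mul_inv]
  set d := q.natDegree with hd
  have key : ∀ k, bellEuler 1 x y k = k.factorial * PowerSeries.coeff (R := ℝ) k F := fun k => rfl
  calc q.eval x = ∑ m ∈ Finset.range (d + 1), q.coeff m * x ^ m := by
        rw [Polynomial.eval_eq_sum_range]
    _ = ∑ m ∈ Finset.range (d + 1), ∑ k ∈ Finset.range (n + 1),
          (q.coeff m * m.factorial * (if k ≤ m then PowerSeries.coeff (R := ℝ) (m - k) g else 0))
            * PowerSeries.coeff (R := ℝ) k F := by
        refine Finset.sum_congr rfl fun m hm => ?_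
        have hmn : m ≤ n := by
          have := Finset.mem_range.1 hm; omega
        have : ∑ k ∈ Finset.range (n + 1),
            (q.coeff m * m.factorial * (if k ≤ m then PowerSeries.coeff (R := ℝ) (m - k) g else 0))
              * PowerSeries.coeff (R := ℝ) k F =
            ∑ k ∈ Finset.range (m + 1),
              q.coeff m * m.factorial *
                (PowerSeries.coeff (R := ℝ) k F * PowerSeries.coeff (R := ℝ) (m - k) g) := by
          rw [← Finset.sum_subset (Finset.range_subset_range.2 (by omega : m + 1 ≤ n + 1))
            (fun k _ hk => ?_)]
          · refine Finset.sum_congr rfl fun k hk => ?_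
            rw [if_pos (by simpa [Nat.lt_succ_iff] using hk)]
            ring
          · rw [if_neg (by simp at hk; omega), mul_zero, zero_mul]
        rw [this, ← Finset.mul_sum,
          ← Finset.Nat.sum_antidiagonal_eq_sum_range_succ_mk
            (fun p => PowerSeries.coeff (R := ℝ) p.1 F * PowerSeries.coeff (R := ℝ) p.2 g),
          ← PowerSeries.coeff_mul, hgF m]
        have h3 : (m.factorial : ℝ) ≠ 0 := Nat.cast_ne_zero.2 m.factorial_ne_zero
        field_simp
    _ = ∑ k ∈ Finset.range (n + 1),
          (((k.factorial : ℝ))⁻¹ * umbral (g * PowerSeries.X ^ k) q) * bellEuler 1 x y k := by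
        rw [Finset.sum_comm]
        refine Finset.sum_congr rfl fun k _ => ?_
        rw [key, umbral]
        have hk : (k.factorial : ℝ) ≠ 0 := Nat.cast_ne_zero.2 k.factorial_ne_zero
        have : ∀ m ∈ Finset.range (d + 1),
            q.coeff m * m.factorial * PowerSeries.coeff (R := ℝ) m (g * PowerSeries.X ^ k) =
            q.coeff m * m.factorial * (if k ≤ m then PowerSeries.coeff (R := ℝ) (m - k) g else 0) := by
          intro m _
          rw [PowerSeries.coeff_mul_X_pow']
        rw [Finset.sum_congr rfl this, ← Finset.sum_mul]
        field_simp
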